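/- Let r and R be positive integers. The rational function f(x,y,t) = [(1-xy)(1-t x^r)(1-t y^R) + (1-t^2)(x-x^r)(y-y^R)] / [(1-t x^r)(1-t y^R)(1-x)(1-y)(1-tx)(1-ty)] has nonnegative coefficients when expanded as a power series in x, y, t centered at the origin. -/

import Mathlib

open MvPowerSeries

noncomputable def fBG (r R : ℕ) : MvPowerSeries (Fin 3) ℚ :=
  let x : MvPowerSeries (Fin 3) ℚ := X 0
  let y : MvPowerSeries (Fin 3) ℚ := X 1
  let t : MvPowerSeries (Fin 3) ℚ := X 2
  ((1 - x * y) * (1 - t * x ^ r) * (1 - t * y ^ R) +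
      (1 - t ^ 2) * (x - x ^ r) * (y - y ^ R)) *
    ((1 - t * x ^ r) * (1 - t * y ^ R) * (1 - x) * (1 - y) *
      (1 - t * x) * (1 - t * y))⁻¹

namespace FBGAux

open Finsupp

-- geometric series `1 + X^d + X^(2d) + ...`
open Classical in
noncomputable def geom (d : Fin 3 →₀ ℕ) : MvPowerSeries (Fin 3) ℚ :=
  fun e => if ∃ k : ℕ, e = k • d then (1 : ℚ) else 0

open Classical in
lemma coeff_geom (d e : Fin 3 →₀ ℕ) :
    coeff e (geom d) = if ∃ k : ℕ, e = k • d then (1 : ℚ) else 0 := rfl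

lemma coeff_geom_zero (d : Fin 3 →₀ ℕ) : coeff 0 (geom d) = 1 := by
  rw [coeff_geom]
  exact if_pos ⟨0, by simp⟩

lemma coeff_geom_nonneg (d e : Fin 3 →₀ ℕ) : 0 ≤ coeff e (geom d) := by
  rw [coeff_geom]; split <;> norm_num

lemma one_sub_mul_geom {d : Fin 3 →₀ ℕ} (hd : d ≠ 0) :
    (1 - monomial d 1) * geom d = 1 := by
  classical
  ext e
  rw [sub_mul, one_mul, map_sub, coeff_monomial_mul, coeff_one]
  simp only [coeff_geom]
  by_cases he : e = 0
  · subst he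
    have h1 : ∃ k : ℕ, (0 : Fin 3 →₀ ℕ) = k • d := ⟨0, by simp⟩
    simp [h1, hd]
  · by_cases h1 : ∃ k : ℕ, e = k • d
    · obtain ⟨k, rfl⟩ := h1
      match k, he with
      | 0, he => simp at he
      | Nat.succ k, he =>
        have hle : d ≤ (k + 1) • d := by
          rw [succ_nsmul]; exact le_add_self
        have hsub : (k + 1) • d - d = k • d := by
          rw [succ_nsmul]; exact add_tsub_cancel_right _ _
        have hex : ∃ k' : ℕ, (k + 1) • d = k' • d := ⟨k + 1, rfl⟩
        have hex2 : ∃ k' : ℕ, (k + 1) • d - d = k' • d := ⟨k, hsub⟩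
        simp [he, hle, hex, hex2, hd]
    · by_cases hle : d ≤ e
      · have h2 : ¬ ∃ k : ℕ, e - d = k • d := by
          rintro ⟨k, hk⟩
          exact h1 ⟨k + 1, by rw [succ_nsmul, ← hk, tsub_add_cancel_of_le hle]⟩
        simp [he, h1, hle, h2]
      · simp [he, h1, hle]

/-- nonnegativity of all coefficients -/
def NN (F : MvPowerSeries (Fin 3) ℚ) : Prop := ∀ d, 0 ≤ coeff d F

lemma NN.add {F G : MvPowerSeries (Fin 3) ℚ} (hF : NN F) (hG : NN G) : NN (F + G) :=
  fun d => by rw [map_add]; exact add_nonneg (hF d) (hG d)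

lemma NN.mul {F G : MvPowerSeries (Fin 3) ℚ} (hF : NN F) (hG : NN G) : NN (F * G) := by
  classical
  intro d
  rw [coeff_mul]
  exact Finset.sum_nonneg fun p _ => mul_nonneg (hF p.1) (hG p.2)

lemma NN.one : NN 1 := by
  classical
  intro d; rw [coeff_one]; split <;> norm_num

lemma NN.monomial {d : Fin 3 →₀ ℕ} {a : ℚ} (ha : 0 ≤ a) : NN (monomial d a) := by
  classical
  intro e; rw [coeff_monomial]; split
  exacts [ha, le_rfl]

lemma NN.X (i : Fin 3) : NN (X i) := by
  rw [X_def]; exact NN.monomial zero_le_one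

lemma NN.pow {F : MvPowerSeries (Fin 3) ℚ} (hF : NN F) (n : ℕ) : NN (F ^ n) := by
  induction n with
  | zero => simpa using NN.one
  | succ n ih => rw [pow_succ]; exact ih.mul hF

lemma NN.geom (d : Fin 3 →₀ ℕ) : NN (geom d) := coeff_geom_nonneg d

end FBGAux

open FBGAux Finsupp

theorem fBG_nonneg (r R : ℕ) (hr : 0 < r) (hR : 0 < R) (d : Fin 3 →₀ ℕ) :
    0 ≤ MvPowerSeries.coeff d (fBG r R) := by
  classical
  set x : MvPowerSeries (Fin 3) ℚ := X 0 with hxdef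
  set y : MvPowerSeries (Fin 3) ℚ := X 1 with hydef
  set t : MvPowerSeries (Fin 3) ℚ := X 2 with htdef
  -- the six geometric series
  set Gx := geom (single 0 1) with hGxdef
  set Gy := geom (single 1 1) with hGydef
  set Gu := geom (single 0 1 + single 2 1) with hGudef
  set Gv := geom (single 1 1 + single 2 1) with hGvdef
  set GU := geom (single 0 r + single 2 1) with hGUdef
  set GV := geom (single 1 R + single 2 1) with hGVdef
  -- the polynomials P, Q
  set P : MvPowerSeries (Fin 3) ℚ := ∑ i ∈ Finset.Ico 1 r, x ^ i with hPdef
  set Q : MvPowerSeries (Fin 3) ℚ := ∑ j ∈ Finset.Ico 1 R, y ^ j with hQdef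
  -- monomial identifications
  have hxm : x = MvPowerSeries.monomial (single 0 1) 1 := rfl
  have hym : y = MvPowerSeries.monomial (single 1 1) 1 := rfl
  have hum : t * x = MvPowerSeries.monomial (single 0 1 + single 2 1) 1 := by
    rw [hxdef, htdef, X_def, X_def, monomial_mul_monomial, one_mul, add_comm]
  have hvm : t * y = MvPowerSeries.monomial (single 1 1 + single 2 1) 1 := by
    rw [hydef, htdef, X_def, X_def, monomial_mul_monomial, one_mul, add_comm]
  have hUm : t * x ^ r = MvPowerSeries.monomial (single 0 r + single 2 1) 1 := by
    rw [hxdef, htdef, X_def, X_pow_eq, monomial_mul_monomial, one_mul, add_comm]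
  have hVm : t * y ^ R = MvPowerSeries.monomial (single 1 R + single 2 1) 1 := by
    rw [hydef, htdef, X_def, X_pow_eq, monomial_mul_monomial, one_mul, add_comm]
  -- non-vanishing of exponents
  have hne : ∀ (i : Fin 3) (n : ℕ), (single i n + single 2 1 : Fin 3 →₀ ℕ) ≠ 0 := by
    intro i n h
    have := DFunLike.congr_fun h 2
    simp [Finsupp.single_apply] at this
  -- the six inversion identities
  have hgx : (1 - x) * Gx = 1 := by
    rw [hGxdef, hxm]; exact one_sub_mul_geom (fun h => one_ne_zero (Finsupp.single_eq_zero.mp h))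
  have hgy : (1 - y) * Gy = 1 := by
    rw [hGydef, hym]; exact one_sub_mul_geom (fun h => one_ne_zero (Finsupp.single_eq_zero.mp h))
  have hgu : (1 - t * x) * Gu = 1 := by
    rw [hGudef, hum]; exact one_sub_mul_geom (hne 0 1)
  have hgv : (1 - t * y) * Gv = 1 := by
    rw [hGvdef, hvm]; exact one_sub_mul_geom (hne 1 1)
  have hgU : (1 - t * x ^ r) * GU = 1 := by
    rw [hGUdef, hUm]; exact one_sub_mul_geom (hne 0 r)
  have hgV : (1 - t * y ^ R) * GV = 1 := by
    rw [hGVdef, hVm]; exact one_sub_mul_geom (hne 1 R)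
  -- geometric sum identities for P and Q
  have hP : (1 - x) * P = x - x ^ r := by
    have hsum : ∑ i ∈ Finset.range r, x ^ i = 1 + P := by
      rw [Finset.range_eq_Ico, Finset.sum_eq_sum_Ico_succ_bot hr, hPdef]; norm_num
    have h := mul_geom_sum x r
    rw [hsum] at h
    linear_combination -h
  have hQ : (1 - y) * Q = y - y ^ R := by
    have hsum : ∑ j ∈ Finset.range R, y ^ j = 1 + Q := by
      rw [Finset.range_eq_Ico, Finset.sum_eq_sum_Ico_succ_bot hR, hQdef]; norm_num
    have h := mul_geom_sum y R
    rw [hsum] at h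
    linear_combination -h
  have hxr : x ^ r = x - (1 - x) * P := by linear_combination hP
  have hyR : y ^ R = y - (1 - y) * Q := by linear_combination hQ
  -- the nonnegative decomposition
  set S : MvPowerSeries (Fin 3) ℚ :=
    Gx * GU * Gv + t * P * (Gu * GU * GV) + y * (Gy * Gu * GV) +
      t * y * Q * (GU * Gv * GV) + P * Q * ((Gu + Gv - 1) * (GU * GV)) with hSdef
  set D : MvPowerSeries (Fin 3) ℚ :=
    (1 - t * x ^ r) * (1 - t * y ^ R) * (1 - x) * (1 - y) * (1 - t * x) * (1 - t * y)
    with hDdef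
  set N : MvPowerSeries (Fin 3) ℚ :=
    (1 - x * y) * (1 - t * x ^ r) * (1 - t * y ^ R) +
      (1 - t ^ 2) * (x - x ^ r) * (y - y ^ R) with hNdef
  -- the five cancellation computations
  have e1 : (Gx * GU * Gv) * D = (1 - y) * (1 - t * x) * (1 - t * y ^ R) := by
    calc (Gx * GU * Gv) * D
        = ((1 - x) * Gx) * ((1 - t * x ^ r) * GU) * ((1 - t * y) * Gv) *
            ((1 - y) * (1 - t * x) * (1 - t * y ^ R)) := by rw [hDdef]; ring
      _ = (1 - y) * (1 - t * x) * (1 - t * y ^ R) := by rw [hgx, hgU, hgv]; ring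
  have e2 : (t * P * (Gu * GU * GV)) * D =
      t * P * ((1 - x) * (1 - y) * (1 - t * y)) := by
    calc (t * P * (Gu * GU * GV)) * D
        = ((1 - t * x) * Gu) * ((1 - t * x ^ r) * GU) * ((1 - t * y ^ R) * GV) *
            (t * P * ((1 - x) * (1 - y) * (1 - t * y))) := by rw [hDdef]; ring
      _ = t * P * ((1 - x) * (1 - y) * (1 - t * y)) := by rw [hgu, hgU, hgV]; ring
  have e3 : (y * (Gy * Gu * GV)) * D =
      y * ((1 - x) * (1 - t * x ^ r) * (1 - t * y)) := by
    calc (y * (Gy * Gu * GV)) * D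
        = ((1 - y) * Gy) * ((1 - t * x) * Gu) * ((1 - t * y ^ R) * GV) *
            (y * ((1 - x) * (1 - t * x ^ r) * (1 - t * y))) := by rw [hDdef]; ring
      _ = y * ((1 - x) * (1 - t * x ^ r) * (1 - t * y)) := by rw [hgy, hgu, hgV]; ring
  have e4 : (t * y * Q * (GU * Gv * GV)) * D =
      t * y * Q * ((1 - x) * (1 - y) * (1 - t * x)) := by
    calc (t * y * Q * (GU * Gv * GV)) * D
        = ((1 - t * x ^ r) * GU) * ((1 - t * y) * Gv) * ((1 - t * y ^ R) * GV) *
            (t * y * Q * ((1 - x) * (1 - y) * (1 - t * x))) := by rw [hDdef]; ring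
      _ = t * y * Q * ((1 - x) * (1 - y) * (1 - t * x)) := by rw [hgU, hgv, hgV]; ring
  have h5 : (Gu + Gv - 1) * ((1 - t * x) * (1 - t * y)) =
      1 - (t * x) * (t * y) := by
    calc (Gu + Gv - 1) * ((1 - t * x) * (1 - t * y))
        = (1 - t * y) * ((1 - t * x) * Gu) + (1 - t * x) * ((1 - t * y) * Gv) -
            (1 - t * x) * (1 - t * y) := by ring
      _ = 1 - (t * x) * (t * y) := by rw [hgu, hgv]; ring
  have e5 : (P * Q * ((Gu + Gv - 1) * (GU * GV))) * D =
      P * Q * ((1 - x) * (1 - y) * (1 - (t * x) * (t * y))) := by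
    calc (P * Q * ((Gu + Gv - 1) * (GU * GV))) * D
        = ((1 - t * x ^ r) * GU) * ((1 - t * y ^ R) * GV) *
            ((Gu + Gv - 1) * ((1 - t * x) * (1 - t * y))) *
            (P * Q * ((1 - x) * (1 - y))) := by rw [hDdef]; ring
      _ = P * Q * ((1 - x) * (1 - y) * (1 - (t * x) * (t * y))) := by
          rw [hgU, hgV, h5]; ring
  -- the key algebraic identity
  have hSD : S * D = N := by
    have hexp : S * D =
        (Gx * GU * Gv) * D + (t * P * (Gu * GU * GV)) * D + (y * (Gy * Gu * GV)) * D +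
          (t * y * Q * (GU * Gv * GV)) * D +
          (P * Q * ((Gu + Gv - 1) * (GU * GV))) * D := by rw [hSdef]; ring
    rw [hexp, e1, e2, e3, e4, e5, hNdef, hxr, hyR]
    ring
  -- D is invertible with inverse built from the geometric series
  have hDc : MvPowerSeries.constantCoeff D ≠ 0 := by
    rw [hDdef]
    simp only [hxdef, hydef, htdef, map_mul, map_sub, map_one, map_pow, constantCoeff_X]
    norm_num
  -- identify fBG with S
  have hf : fBG r R = N * D⁻¹ := rfl
  have hfS : fBG r R = S := by
    rw [hf, ← hSD, mul_assoc, MvPowerSeries.mul_inv_cancel D hDc, mul_one]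
  -- nonnegativity
  have hNNP : NN P := by
    intro e
    rw [hPdef, map_sum]
    exact Finset.sum_nonneg fun i _ => (NN.pow (hxdef ▸ NN.X 0) i) e
  have hNNQ : NN Q := by
    intro e
    rw [hQdef, map_sum]
    exact Finset.sum_nonneg fun j _ => (NN.pow (hydef ▸ NN.X 1) j) e
  have hNNuv : NN (Gu + Gv - 1) := by
    intro e
    rw [map_sub, map_add, MvPowerSeries.coeff_one]
    by_cases he : e = 0
    · subst he
      rw [if_pos rfl, hGudef, hGvdef, coeff_geom_zero, coeff_geom_zero]
      norm_num
    · rw [if_neg he, sub_zero]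
      exact add_nonneg (hGudef ▸ NN.geom _ e) (hGvdef ▸ NN.geom _ e)
  have hNNS : NN S := by
    rw [hSdef]
    have hx' : NN x := hxdef ▸ NN.X 0
    have hy' : NN y := hydef ▸ NN.X 1
    have ht' : NN t := htdef ▸ NN.X 2
    have g1 : NN Gx := hGxdef ▸ NN.geom _
    have g2 : NN Gy := hGydef ▸ NN.geom _
    have g3 : NN Gu := hGudef ▸ NN.geom _
    have g4 : NN Gv := hGvdef ▸ NN.geom _
    have g5 : NN GU := hGUdef ▸ NN.geom _
    have g6 : NN GV := hGVdef ▸ NN.geom _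
    exact ((((g1.mul g5).mul g4).add
      (((ht'.mul hNNP).mul ((g3.mul g5).mul g6)))).add
      ((hy'.mul ((g2.mul g3).mul g6)))).add
      (((ht'.mul hy').mul hNNQ).mul ((g5.mul g4).mul g6)) |>.add
      ((hNNP.mul hNNQ).mul (hNNuv.mul (g5.mul g6)))
  rw [hfS]
  exact hNNS d
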